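/- Let V : X × [0,1] → ℝ where X is finite, with V(x,·) nondecreasing, continuous, and concave for each x, and let p be a probability distribution on X. Define F(y) = max over b ∈ B(y) of Σ_x V(x, y·b(x))·p(x), where B(y) = {b ∈ ℝ^X : Σ_x p(x)b(x) = 1, 0 ≤ y·b(x) ≤ 1 for all x}. Then F is nondecreasing, continuous, and concave on [0,1]. -/

import Mathlib

open Set

/-- For `V(x,·)` nondecreasing, continuous, concave on `[0,1]` for each `x` in a finite
set, and `p` a probability vector, the function
`F(y) = max_{b ∈ B(y)} Σ_x V(x, y b(x)) p(x)`, where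
`B(y) = {b : Σ p(x) b(x) = 1, 0 ≤ y b(x) ≤ 1}`, is nondecreasing, continuous, and
concave on `[0,1]`. -/
theorem F_monotone_continuous_concave {X : Type*} [Fintype X] [Nonempty X]
    (p : X → ℝ) (hp0 : ∀ x, 0 ≤ p x) (hp1 : (∑ x, p x) = 1)
    (V : X → ℝ → ℝ)
    (hmono : ∀ x, MonotoneOn (V x) (Set.Icc 0 1))
    (hcont : ∀ x, ContinuousOn (V x) (Set.Icc 0 1))
    (hconc : ∀ x, ConcaveOn ℝ (Set.Icc 0 1) (V x))
    (F : ℝ → ℝ)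
    (hF : ∀ y ∈ Set.Icc (0 : ℝ) 1, F y = sSup {r : ℝ | ∃ b : X → ℝ,
      (∑ x, p x * b x) = 1 ∧ (∀ x, 0 ≤ y * b x ∧ y * b x ≤ 1) ∧
      r = ∑ x, V x (y * b x) * p x}) :
    MonotoneOn F (Set.Icc 0 1) ∧ ContinuousOn F (Set.Icc 0 1) ∧
      ConcaveOn ℝ (Set.Icc 0 1) F := by
  classical
  set S : ℝ → Set ℝ := fun y => {r : ℝ | ∃ z : X → ℝ,
      (∀ x, z x ∈ Set.Icc (0:ℝ) 1) ∧ (∑ x, p x * z x) = y ∧ r = ∑ x, V x (z x) * p x}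
    with hSdef
  have h01 : (0:ℝ) ∈ Set.Icc (0:ℝ) 1 := ⟨le_refl _, zero_le_one⟩
  have h11 : (1:ℝ) ∈ Set.Icc (0:ℝ) 1 := ⟨zero_le_one, le_refl _⟩
  -- nonemptiness
  have hne : ∀ y ∈ Set.Icc (0:ℝ) 1, (S y).Nonempty := by
    intro y hy
    exact ⟨∑ x, V x y * p x, fun _ => y, fun x => hy,
      by rw [← Finset.sum_mul, hp1, one_mul], rfl⟩
  -- bounded above
  have hbdd : ∀ y : ℝ, BddAbove (S y) := by
    intro y
    refine ⟨∑ x, V x 1 * p x, ?_⟩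
    rintro r ⟨z, hz, -, rfl⟩
    exact Finset.sum_le_sum fun x _ =>
      mul_le_mul_of_nonneg_right (hmono x (hz x) h11 (hz x).2) (hp0 x)
  -- F equals sSup of S on Icc 0 1
  have hFS : ∀ y ∈ Set.Icc (0:ℝ) 1, F y = sSup (S y) := by
    intro y hy
    rw [hF y hy]
    congr 1
    ext r
    constructor
    · rintro ⟨b, hb1, hb2, rfl⟩
      refine ⟨fun x => y * b x, fun x => ⟨(hb2 x).1, (hb2 x).2⟩, ?_, rfl⟩
      calc ∑ x, p x * (y * b x) = y * ∑ x, p x * b x := by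
            rw [Finset.mul_sum]; exact Finset.sum_congr rfl fun x _ => by ring
        _ = y := by rw [hb1, mul_one]
    · rintro ⟨z, hz, hzsum, rfl⟩
      rcases eq_or_lt_of_le hy.1 with hy0 | hy0
      · -- y = 0
        have hz0 : ∀ x, p x * z x = 0 := by
          have := (Finset.sum_eq_zero_iff_of_nonneg
            (fun x _ => mul_nonneg (hp0 x) (hz x).1)).mp (by rw [hzsum, ← hy0])
          exact fun x => this x (Finset.mem_univ x)
        refine ⟨fun _ => 1, by simpa using hp1, fun x => by
          constructor <;> rw [← hy0] <;> norm_num, ?_⟩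
        refine Finset.sum_congr rfl fun x _ => ?_
        rcases (hp0 x).eq_or_lt with hpx | hpx
        · rw [← hpx, mul_zero, mul_zero]
        · have hzx : z x = 0 := by
            rcases mul_eq_zero.mp (hz0 x) with h | h
            · exact absurd h (ne_of_gt hpx)
            · exact h
          rw [hzx, ← hy0, mul_one]
      · -- y > 0
        refine ⟨fun x => z x / y, ?_, fun x => ?_, ?_⟩
        · calc ∑ x, p x * (z x / y) = (∑ x, p x * z x) / y := by
                rw [Finset.sum_div]; exact Finset.sum_congr rfl fun x _ => by ring
            _ = 1 := by rw [hzsum]; exact div_self (ne_of_gt hy0)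
        · have h : y * (z x / y) = z x := by field_simp
          rw [h]; exact ⟨(hz x).1, (hz x).2⟩
        · refine Finset.sum_congr rfl fun x _ => ?_
          have h : y * (z x / y) = z x := by field_simp
          rw [h]
  -- Monotone
  have hMono : MonotoneOn F (Set.Icc 0 1) := by
    intro y₁ h₁ y₂ h₂ hle
    rw [hFS y₁ h₁, hFS y₂ h₂]
    refine csSup_le (hne y₁ h₁) ?_
    rintro r ⟨z, hz, hzsum, rfl⟩
    rcases eq_or_lt_of_le h₁.2 with hy1 | hy1
    · have hcoinc : y₂ = y₁ := le_antisymm (hy1 ▸ h₂.2) hle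
      exact le_csSup (hbdd y₂) ⟨z, hz, by rw [hzsum, hcoinc], rfl⟩
    · set t : ℝ := (y₂ - y₁) / (1 - y₁) with ht
      have hden : (0:ℝ) < 1 - y₁ := by linarith
      have ht0 : 0 ≤ t := div_nonneg (by linarith) hden.le
      have ht1 : t ≤ 1 := (div_le_one hden).mpr (by linarith [h₂.2])
      set z' : X → ℝ := fun x => z x + t * (1 - z x) with hz'
      have hzle : ∀ x, z x ≤ z' x := by
        intro x
        have : 0 ≤ t * (1 - z x) := mul_nonneg ht0 (by linarith [(hz x).2])
        simp only [hz']; linarith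
      have hz'mem : ∀ x, z' x ∈ Set.Icc (0:ℝ) 1 := by
        intro x
        have hb1 := (hz x).1; have hb2 := (hz x).2
        refine ⟨(hz x).1.trans (hzle x), ?_⟩
        simp only [hz']; nlinarith
      have hz'sum : ∑ x, p x * z' x = y₂ := by
        have expand : ∑ x, p x * z' x
            = (∑ x, p x * z x) + t * ((∑ x, p x) - ∑ x, p x * z x) := by
          simp only [hz']
          rw [mul_sub, Finset.mul_sum, Finset.mul_sum, ← Finset.sum_sub_distrib,
            ← Finset.sum_add_distrib]
          exact Finset.sum_congr rfl fun x _ => by ring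
        rw [expand, hzsum, hp1, ht]
        field_simp
        ring
      have hval : (∑ x, V x (z x) * p x) ≤ ∑ x, V x (z' x) * p x :=
        Finset.sum_le_sum fun x _ =>
          mul_le_mul_of_nonneg_right (hmono x (hz x) (hz'mem x) (hzle x)) (hp0 x)
      exact hval.trans (le_csSup (hbdd y₂) ⟨z', hz'mem, hz'sum, rfl⟩)
  -- Concave
  have hConc : ConcaveOn ℝ (Set.Icc 0 1) F := by
    refine ⟨convex_Icc 0 1, ?_⟩
    intro y₁ h₁ y₂ h₂ a b ha hb hab
    have hcomb : a • y₁ + b • y₂ ∈ Set.Icc (0:ℝ) 1 := (convex_Icc 0 1) h₁ h₂ ha hb hab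
    rcases eq_or_lt_of_le ha with ha0 | ha0
    · have hb1 : b = 1 := by linarith
      simp only [← ha0, hb1, zero_smul, one_smul, zero_add, le_refl]
    rcases eq_or_lt_of_le hb with hb0 | hb0
    · have ha1 : a = 1 := by linarith
      simp only [← hb0, ha1, zero_smul, one_smul, add_zero, le_refl]
    simp only [smul_eq_mul] at hcomb ⊢
    rw [hFS y₁ h₁, hFS y₂ h₂, hFS _ hcomb]
    -- key: pointwise combination lies below sSup
    have key : ∀ r₁ ∈ S y₁, ∀ r₂ ∈ S y₂, a * r₁ + b * r₂ ≤ sSup (S (a * y₁ + b * y₂)) := by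
      rintro r₁ ⟨z₁, hz₁, hs₁, rfl⟩ r₂ ⟨z₂, hz₂, hs₂, rfl⟩
      refine le_trans ?_ (le_csSup (hbdd _)
        ⟨fun x => a * z₁ x + b * z₂ x, fun x => ?_, ?_, rfl⟩)
      · have step : ∀ x ∈ Finset.univ, (a * (V x (z₁ x)) + b * (V x (z₂ x))) * p x
            ≤ V x (a * z₁ x + b * z₂ x) * p x := by
          intro x _
          refine mul_le_mul_of_nonneg_right ?_ (hp0 x)
          have := (hconc x).2 (hz₁ x) (hz₂ x) ha hb hab
          simpa [smul_eq_mul] using this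
        calc a * (∑ x, V x (z₁ x) * p x) + b * (∑ x, V x (z₂ x) * p x)
            = ∑ x, (a * (V x (z₁ x)) + b * (V x (z₂ x))) * p x := by
              rw [Finset.mul_sum, Finset.mul_sum, ← Finset.sum_add_distrib]
              exact Finset.sum_congr rfl fun x _ => by ring
          _ ≤ ∑ x, V x (a * z₁ x + b * z₂ x) * p x := Finset.sum_le_sum step
      · have := (convex_Icc (0:ℝ) 1) (hz₁ x) (hz₂ x) ha hb hab
        simpa [smul_eq_mul] using this
      · calc ∑ x, p x * (a * z₁ x + b * z₂ x)
            = a * (∑ x, p x * z₁ x) + b * (∑ x, p x * z₂ x) := by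
              rw [Finset.mul_sum, Finset.mul_sum, ← Finset.sum_add_distrib]
              exact Finset.sum_congr rfl fun x _ => by ring
          _ = a * y₁ + b * y₂ := by rw [hs₁, hs₂]
    set C := sSup (S (a * y₁ + b * y₂)) with hC
    have h1 : sSup (S y₁) ≤ (C - b * sSup (S y₂)) / a := by
      refine csSup_le (hne y₁ h₁) ?_
      intro r₁ hr₁
      rw [le_div_iff₀ ha0]
      have h2 : sSup (S y₂) ≤ (C - a * r₁) / b := by
        refine csSup_le (hne y₂ h₂) ?_
        intro r₂ hr₂
        rw [le_div_iff₀ hb0]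
        have := key r₁ hr₁ r₂ hr₂
        linarith
      have h2' : sSup (S y₂) * b ≤ C - a * r₁ := (le_div_iff₀ hb0).mp h2
      linarith
    have h1' : sSup (S y₁) * a ≤ C - b * sSup (S y₂) := (le_div_iff₀ ha0).mp h1
    linarith
  -- value at 0
  have hF0 : F 0 = ∑ x, V x 0 * p x := by
    rw [hFS 0 h01]
    have hSeq : S 0 = {∑ x, V x 0 * p x} := by
      apply Set.Subset.antisymm
      · rintro r ⟨z, hz, hzsum, rfl⟩
        have hz0 : ∀ x, p x * z x = 0 := by
          have := (Finset.sum_eq_zero_iff_of_nonneg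
            (fun x _ => mul_nonneg (hp0 x) (hz x).1)).mp hzsum
          exact fun x => this x (Finset.mem_univ x)
        have : (∑ x, V x (z x) * p x) = ∑ x, V x 0 * p x := by
          refine Finset.sum_congr rfl fun x _ => ?_
          rcases (hp0 x).eq_or_lt with hpx | hpx
          · rw [← hpx, mul_zero, mul_zero]
          · have hzx : z x = 0 := by
              rcases mul_eq_zero.mp (hz0 x) with h | h
              · exact absurd h (ne_of_gt hpx)
              · exact h
            rw [hzx]
        simp [this]
      · rintro r hr
        rw [Set.mem_singleton_iff] at hr
        exact ⟨fun _ => 0, fun x => ⟨le_refl _, zero_le_one⟩, by simp, by simp [hr]⟩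
    rw [hSeq, csSup_singleton]
  -- upper bound near 0
  set H : ℝ → ℝ := fun y => ∑ x, (V x (min 1 (y * (p x)⁻¹)) - V x 0) * p x with hH
  have hminmem : ∀ (y : ℝ), 0 ≤ y → ∀ x : X, min 1 (y * (p x)⁻¹) ∈ Set.Icc (0:ℝ) 1 := by
    intro y hy x
    exact ⟨le_min zero_le_one (mul_nonneg hy (inv_nonneg.mpr (hp0 x))), min_le_left _ _⟩
  have hFbound0 : ∀ y ∈ Set.Icc (0:ℝ) 1, F y ≤ F 0 + H y := by
    intro y hy
    rw [hFS y hy, hF0]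
    refine csSup_le (hne y hy) ?_
    rintro r ⟨z, hz, hzsum, rfl⟩
    have hterm : ∀ x ∈ Finset.univ, V x (z x) * p x ≤ V x (min 1 (y * (p x)⁻¹)) * p x := by
      intro x _
      rcases (hp0 x).eq_or_lt with hpx | hpx
      · rw [← hpx, mul_zero, mul_zero]
      · refine mul_le_mul_of_nonneg_right ?_ (hp0 x)
        have hsingle : p x * z x ≤ y := by
          rw [← hzsum]
          exact Finset.single_le_sum
            (fun x' _ => mul_nonneg (hp0 x') (hz x').1) (Finset.mem_univ x)
        have hzxle : z x ≤ y * (p x)⁻¹ := by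
          rw [← div_eq_mul_inv, le_div_iff₀ hpx]
          linarith [hsingle]
        exact hmono x (hz x) (hminmem y hy.1 x) (le_min (hz x).2 hzxle)
    have hsum : (∑ x, V x (z x) * p x) ≤ ∑ x, V x (min 1 (y * (p x)⁻¹)) * p x :=
      Finset.sum_le_sum hterm
    have hsplit : (∑ x, V x 0 * p x) + H y = ∑ x, V x (min 1 (y * (p x)⁻¹)) * p x := by
      rw [hH, ← Finset.sum_add_distrib]
      exact Finset.sum_congr rfl fun x _ => by ring
    linarith
  -- continuity at 0
  have hH0 : H 0 = 0 := by
    rw [hH]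
    refine Finset.sum_eq_zero fun x _ => by simp
  have hHcont : ContinuousWithinAt H (Set.Icc 0 1) 0 := by
    have hterm : ∀ x : X, ContinuousWithinAt
        (fun y : ℝ => (V x (min 1 (y * (p x)⁻¹)) - V x 0) * p x) (Set.Icc 0 1) 0 := by
      intro x
      apply ContinuousWithinAt.mul _ continuousWithinAt_const
      apply ContinuousWithinAt.sub _ continuousWithinAt_const
      have inner : ContinuousWithinAt (fun y : ℝ => min 1 (y * (p x)⁻¹)) (Set.Icc 0 1) 0 :=
        (continuous_const.min (continuous_id.mul continuous_const)).continuousWithinAt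
      have h0 : min 1 ((0:ℝ) * (p x)⁻¹) = 0 := by simp
      have hVc : ContinuousWithinAt (V x) (Set.Icc 0 1) (min 1 ((0:ℝ) * (p x)⁻¹)) := by
        rw [h0]; exact hcont x 0 h01
      exact ContinuousWithinAt.comp (g := V x)
        (f := fun y : ℝ => min 1 (y * (p x)⁻¹)) (s := Set.Icc 0 1) (t := Set.Icc 0 1)
        hVc inner (fun y hy => hminmem y hy.1 x)
    exact tendsto_finset_sum Finset.univ (fun x _ => hterm x)
  have hcw0 : ContinuousWithinAt F (Set.Icc 0 1) 0 := by
    have hupper : Filter.Tendsto (fun y => F 0 + H y) (nhdsWithin 0 (Set.Icc 0 1)) (nhds (F 0)) := by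
      have h2 : ContinuousWithinAt (fun y => F 0 + H y) (Set.Icc 0 1) 0 :=
        ContinuousWithinAt.add continuousWithinAt_const hHcont
      have h3 : Filter.Tendsto (fun y => F 0 + H y)
          (nhdsWithin 0 (Set.Icc 0 1)) (nhds (F 0 + H 0)) := h2
      simpa [hH0] using h3
    have hlower : Filter.Tendsto (fun _ : ℝ => F 0) (nhdsWithin 0 (Set.Icc 0 1)) (nhds (F 0)) :=
      tendsto_const_nhds
    refine tendsto_of_tendsto_of_tendsto_of_le_of_le' hlower hupper ?_ ?_
    · filter_upwards [self_mem_nhdsWithin] with y hy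
      exact hMono h01 hy hy.1
    · filter_upwards [self_mem_nhdsWithin] with y hy
      exact hFbound0 y hy
  -- continuity at a > 0
  have hK : 0 ≤ F 1 - F 0 := by linarith [hMono h01 h11 zero_le_one]
  set K := F 1 - F 0 with hKdef
  have hcwa : ∀ a ∈ Set.Icc (0:ℝ) 1, 0 < a → ContinuousWithinAt F (Set.Icc 0 1) a := by
    intro a ha ha0
    have hbounds : ∀ y ∈ Set.Icc (0:ℝ) 1,
        F a - |y - a| / a * K ≤ F y ∧ F y ≤ F a + |y - a| / a * K := by
      intro y hy
      have hFaK : F a - F 0 ≤ K := by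
        have := hMono ha h11 ha.2
        rw [hKdef]; linarith
      have hFyK : F y - F 0 ≤ K := by
        have := hMono hy h11 hy.2
        rw [hKdef]; linarith
      rcases le_total y a with hya | hya
      · -- y ≤ a
        have habs : |y - a| = a - y := by rw [abs_of_nonpos (by linarith)]; ring
        set t : ℝ := y / a with htdef
        have ht0 : 0 ≤ t := div_nonneg hy.1 ha0.le
        have ht1 : t ≤ 1 := (div_le_one ha0).mpr hya
        have hchord := hConc.2 ha h01 ht0 (by linarith : 0 ≤ 1 - t) (by ring)
        have hpt : t • a + (1 - t) • (0:ℝ) = y := by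
          simp only [smul_eq_mul, mul_zero, add_zero, htdef]
          field_simp
        rw [hpt] at hchord
        simp only [smul_eq_mul] at hchord
        have h1t : 1 - t = (a - y) / a := by rw [htdef]; field_simp
        have hratio : (a - y) / a * (F a - F 0) ≤ (a - y) / a * K :=
          mul_le_mul_of_nonneg_left hFaK (div_nonneg (by linarith) ha0.le)
        constructor
        · rw [habs]
          nlinarith [hchord, hratio, h1t]
        · have hFya : F y ≤ F a := hMono hy ha hya
          have : 0 ≤ |y - a| / a * K :=
            mul_nonneg (div_nonneg (abs_nonneg _) ha0.le) hK
          linarith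
      · -- a ≤ y
        have habs : |y - a| = y - a := abs_of_nonneg (by linarith)
        have hy0 : 0 < y := lt_of_lt_of_le ha0 hya
        set t : ℝ := a / y with htdef
        have ht0 : 0 ≤ t := div_nonneg ha.1 hy0.le
        have ht1 : t ≤ 1 := (div_le_one hy0).mpr hya
        have hchord := hConc.2 hy h01 ht0 (by linarith : 0 ≤ 1 - t) (by ring)
        have hpt : t • y + (1 - t) • (0:ℝ) = a := by
          simp only [smul_eq_mul, mul_zero, add_zero, htdef]
          field_simp
        rw [hpt] at hchord
        simp only [smul_eq_mul] at hchord
        -- F a ≥ t F y + (1-t) F 0 ⇒ F y - F a ≤ (1-t)(F y - F 0)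
        have hstep : F y - F a ≤ (1 - t) * (F y - F 0) := by nlinarith [hchord]
        have h1t : 1 - t = (y - a) / y := by rw [htdef]; field_simp
        have hdivle : (y - a) / y ≤ (y - a) / a :=
          div_le_div_of_nonneg_left (by linarith) ha0 hya
        have hub : F y - F a ≤ (y - a) / a * K := by
          have h2 : (1 - t) * (F y - F 0) ≤ (y - a) / y * K := by
            rw [h1t]
            exact mul_le_mul_of_nonneg_left hFyK (div_nonneg (by linarith) hy0.le)
          have h3 : (y - a) / y * K ≤ (y - a) / a * K :=
            mul_le_mul_of_nonneg_right hdivle hK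
          linarith
        constructor
        · have hFay : F a ≤ F y := hMono ha hy hya
          have : 0 ≤ |y - a| / a * K :=
            mul_nonneg (div_nonneg (abs_nonneg _) ha0.le) hK
          linarith
        · rw [habs]; linarith
    -- squeeze
    have hlowc : Filter.Tendsto (fun y => F a - |y - a| / a * K)
        (nhdsWithin a (Set.Icc 0 1)) (nhds (F a)) := by
      have hc : Continuous (fun y : ℝ => F a - |y - a| / a * K) :=
        continuous_const.sub ((((continuous_id.sub continuous_const).abs).div_const a).mul
          continuous_const)
      have h2 : Filter.Tendsto (fun y => F a - |y - a| / a * K)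
          (nhdsWithin a (Set.Icc 0 1)) (nhds (F a - |a - a| / a * K)) :=
        hc.continuousWithinAt (s := Set.Icc (0:ℝ) 1) (x := a)
      simpa using h2
    have hupc : Filter.Tendsto (fun y => F a + |y - a| / a * K)
        (nhdsWithin a (Set.Icc 0 1)) (nhds (F a)) := by
      have hc : Continuous (fun y : ℝ => F a + |y - a| / a * K) :=
        continuous_const.add ((((continuous_id.sub continuous_const).abs).div_const a).mul
          continuous_const)
      have h2 : Filter.Tendsto (fun y => F a + |y - a| / a * K)
          (nhdsWithin a (Set.Icc 0 1)) (nhds (F a + |a - a| / a * K)) :=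
        hc.continuousWithinAt (s := Set.Icc (0:ℝ) 1) (x := a)
      simpa using h2
    refine tendsto_of_tendsto_of_tendsto_of_le_of_le' hlowc hupc ?_ ?_
    · filter_upwards [self_mem_nhdsWithin] with y hy
      exact (hbounds y hy).1
    · filter_upwards [self_mem_nhdsWithin] with y hy
      exact (hbounds y hy).2
  have hCont : ContinuousOn F (Set.Icc 0 1) := by
    intro a ha
    rcases eq_or_lt_of_le ha.1 with h | h
    · rw [← h]; exact hcw0
    · exact hcwa a ha h
  exact ⟨hMono, hCont, hConc⟩
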